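/- Fix Δ > 0 and let N(μ,1) denote the Gaussian measure on ℝ with mean μ and variance 1. Then log N(Δ,1)({x : x ≥ t}) / log N(0,1)({x : x ≥ t}) → 1 as t → ∞. Equivalently, writing δ(t) = N(0,1)({x : x ≥ t}) and TPR(t) = N(Δ,1)({x : x ≥ t}), the log-exponent log TPR / log δ of the Neyman–Pearson classifier tends to 1 as δ → 0, exceeding every Hölder exponent β < 1. -/

import Mathlib

open MeasureTheory ProbabilityTheory Real Filter Set
open scoped ENNReal NNReal

noncomputable def gTail (s : ℝ) : ℝ := ((gaussianReal 0 1) {x : ℝ | s ≤ x}).toReal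

lemma pdf01 (x : ℝ) : gaussianPDFReal 0 1 x = (Real.sqrt (2*π))⁻¹ * Real.exp (-x^2/2) := by
  simp [gaussianPDFReal]

lemma gTail_eq (s : ℝ) : gTail s = ∫ x in Set.Ici s, gaussianPDFReal 0 1 x := by
  have h : {x : ℝ | s ≤ x} = Set.Ici s := rfl
  rw [gTail, h, gaussianReal_apply_eq_integral 0 one_ne_zero, ENNReal.toReal_ofReal]
  exact setIntegral_nonneg measurableSet_Ici fun x _ => gaussianPDFReal_nonneg _ _ _

lemma gTail_lower {s : ℝ} (hs : 0 ≤ s) :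
    (Real.sqrt (2*π))⁻¹ * Real.exp (-(s+1)^2/2) ≤ gTail s := by
  rw [gTail_eq]
  have hint : IntegrableOn (gaussianPDFReal 0 1) (Set.Ici s) :=
    (integrable_gaussianPDFReal 0 1).integrableOn
  have h1 : (Real.sqrt (2*π))⁻¹ * Real.exp (-(s+1)^2/2)
      ≤ ∫ x in Set.Icc s (s+1), gaussianPDFReal 0 1 x := by
    have hc : ∫ x in Set.Icc s (s+1), (Real.sqrt (2*π))⁻¹ * Real.exp (-(s+1)^2/2)
        = (Real.sqrt (2*π))⁻¹ * Real.exp (-(s+1)^2/2) := by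
      rw [setIntegral_const, Real.volume_real_Icc]
      norm_num
    rw [← hc]
    refine setIntegral_mono_on ((integrableOn_const_iff).mpr (Or.inr ?_))
      (hint.mono_set Set.Icc_subset_Ici_self) measurableSet_Icc ?_
    · rw [Real.volume_Icc]; exact ENNReal.ofReal_lt_top
    · intro x hx
      rw [pdf01]
      have hx2 : x^2 ≤ (s+1)^2 := by nlinarith [hx.1, hx.2]
      have : Real.exp (-(s+1)^2/2) ≤ Real.exp (-x^2/2) := by
        apply Real.exp_le_exp.mpr; linarith
      have hp : (0:ℝ) < (Real.sqrt (2*π))⁻¹ := by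
        positivity
      nlinarith
  refine h1.trans (setIntegral_mono_set hint ?_ ?_)
  · exact ae_of_all _ fun x => gaussianPDFReal_nonneg _ _ _
  · exact ae_of_all _ Set.Icc_subset_Ici_self

lemma integral_exp_neg_mul_Ioi {s : ℝ} (hs : 0 < s) :
    ∫ x in Set.Ioi s, Real.exp (-s*x) = s⁻¹ * Real.exp (-s*s) := by
  have hderiv : ∀ x ∈ Set.Ici s, HasDerivAt (fun x => -s⁻¹ * Real.exp (-s*x))
      (Real.exp (-s*x)) x := by
    intro x _
    have h1 : HasDerivAt (fun x : ℝ => -s*x) (-s) x := by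
      simpa using (hasDerivAt_id x).const_mul (-s)
    have h2 := (h1.exp).const_mul (-s⁻¹)
    refine h2.congr_deriv ?_
    field_simp
  have hf : Tendsto (fun x => -s⁻¹ * Real.exp (-s*x)) atTop (nhds 0) := by
    have h3 : Tendsto (fun x : ℝ => -s*x) atTop atBot := by
      apply tendsto_id.const_mul_atTop_of_neg (by linarith : -s < 0)
    have := (Real.tendsto_exp_atBot.comp h3).const_mul (-s⁻¹)
    simpa using this
  have := integral_Ioi_of_hasDerivAt_of_tendsto' hderiv
    (exp_neg_integrableOn_Ioi s hs) hf
  rw [this]; ring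

lemma gTail_upper {s : ℝ} (hs : 1 ≤ s) : gTail s ≤ Real.exp (-s^2/2) := by
  have hs0 : 0 < s := by linarith
  rw [gTail_eq, integral_Ici_eq_integral_Ioi]
  have hb : ∫ x in Set.Ioi s, (Real.sqrt (2*π))⁻¹ * Real.exp (s^2/2) * Real.exp (-s*x)
      = (Real.sqrt (2*π))⁻¹ * Real.exp (s^2/2) * (s⁻¹ * Real.exp (-s*s)) := by
    rw [integral_const_mul, integral_exp_neg_mul_Ioi hs0]
  have hmono : ∫ x in Set.Ioi s, gaussianPDFReal 0 1 x
      ≤ ∫ x in Set.Ioi s, (Real.sqrt (2*π))⁻¹ * Real.exp (s^2/2) * Real.exp (-s*x) := by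
    refine setIntegral_mono_on ((integrable_gaussianPDFReal 0 1).integrableOn)
      (((exp_neg_integrableOn_Ioi s hs0).const_mul _)) measurableSet_Ioi ?_
    intro x hx
    rw [pdf01, mul_assoc, ← Real.exp_add]
    have hle : -x^2/2 ≤ s^2/2 + -s*x := by nlinarith [sq_nonneg (x - s)]
    have := Real.exp_le_exp.mpr hle
    have hp : (0:ℝ) < (Real.sqrt (2*π))⁻¹ := by positivity
    nlinarith
  have hfin : (Real.sqrt (2*π))⁻¹ * Real.exp (s^2/2) * (s⁻¹ * Real.exp (-s*s))
      ≤ Real.exp (-s^2/2) := by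
    have h1 : Real.exp (s^2/2) * Real.exp (-s*s) = Real.exp (-s^2/2) := by
      rw [← Real.exp_add]; ring_nf
    have h2 : (Real.sqrt (2*π))⁻¹ ≤ 1 := by
      rw [inv_le_one_iff₀]
      right
      rw [Real.le_sqrt' one_pos]
      nlinarith [Real.pi_gt_three]
    have h3 : s⁻¹ ≤ 1 := by
      rw [inv_le_one_iff₀]; right; exact hs
    have hep : (0:ℝ) < Real.exp (s^2/2) * Real.exp (-s*s) := by positivity
    calc (Real.sqrt (2*π))⁻¹ * Real.exp (s^2/2) * (s⁻¹ * Real.exp (-s*s))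
        ≤ 1 * Real.exp (s^2/2) * (1 * Real.exp (-s*s)) := by
          have hp : (0:ℝ) ≤ (Real.sqrt (2*π))⁻¹ := by positivity
          have hsp : (0:ℝ) ≤ s⁻¹ := by positivity
          have e1 := Real.exp_pos (s^2/2)
          have e2 := Real.exp_pos (-s*s)
          have := mul_le_mul h2 (mul_le_mul h3 le_rfl e2.le zero_le_one)
            (by positivity) zero_le_one
          nlinarith [mul_le_mul_of_nonneg_right this e1.le]
      _ = Real.exp (-s^2/2) := by rw [one_mul, one_mul]; exact h1
  linarith

lemma gTail_pos {s : ℝ} (hs : 0 ≤ s) : 0 < gTail s :=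
  lt_of_lt_of_le (by positivity) (gTail_lower hs)

noncomputable def CC : ℝ := Real.log (Real.sqrt (2*π))

lemma CC_pos : 0 < CC := by
  apply Real.log_pos
  rw [Real.lt_sqrt (by norm_num)]
  nlinarith [Real.pi_gt_three]

lemma log_gTail_upper {s : ℝ} (hs : 1 ≤ s) : Real.log (gTail s) ≤ -s^2/2 := by
  have := Real.log_le_log (gTail_pos (by linarith)) (gTail_upper hs)
  rwa [Real.log_exp] at this

lemma log_gTail_lower {s : ℝ} (hs : 0 ≤ s) :
    -CC + (-(s+1)^2/2) ≤ Real.log (gTail s) := by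
  have h := Real.log_le_log (by positivity) (gTail_lower hs)
  rwa [Real.log_mul (by positivity) (Real.exp_ne_zero _), Real.log_inv, Real.log_exp,
    ← CC] at h

lemma tendsto_lo (Δ : ℝ) :
    Filter.Tendsto (fun t : ℝ => (t-Δ)^2 / ((t+1)^2 + 2*CC)) Filter.atTop (nhds 1) := by
  have hnum : Filter.Tendsto (fun u : ℝ => (1-Δ*u)^2) (nhds 0) (nhds 1) := by
    have : Continuous (fun u : ℝ => (1-Δ*u)^2) := by continuity
    have := this.tendsto 0
    simpa using this
  have hden : Filter.Tendsto (fun u : ℝ => (1+u)^2 + 2*CC*u^2) (nhds 0) (nhds 1) := by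
    have : Continuous (fun u : ℝ => (1+u)^2 + 2*CC*u^2) := by continuity
    have := this.tendsto 0
    simpa using this
  have hdiv : Filter.Tendsto (fun u : ℝ => (1-Δ*u)^2 / ((1+u)^2 + 2*CC*u^2))
      (nhds 0) (nhds 1) := by
    have := hnum.div hden one_ne_zero
    rw [div_one] at this
    exact this
  have hcomp := hdiv.comp tendsto_inv_atTop_zero
  refine hcomp.congr' ?_
  filter_upwards [Filter.eventually_gt_atTop 0] with t ht
  have ht' : t ≠ 0 := ne_of_gt ht
  have hd1 : (1+t⁻¹)^2 + 2*CC*(t⁻¹)^2 > 0 := by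
    have : (0:ℝ) < 1 + t⁻¹ := by positivity
    nlinarith [CC_pos, sq_nonneg t⁻¹]
  have hd2 : (t+1)^2 + 2*CC > 0 := by nlinarith [CC_pos, sq_nonneg (t+1)]
  show (1-Δ*t⁻¹)^2 / ((1+t⁻¹)^2 + 2*CC*(t⁻¹)^2) = (t-Δ)^2 / ((t+1)^2 + 2*CC)
  rw [div_eq_div_iff (ne_of_gt hd1) (ne_of_gt hd2)]
  field_simp

lemma tendsto_hi (Δ : ℝ) :
    Filter.Tendsto (fun t : ℝ => ((t-Δ+1)^2 + 2*CC) / t^2) Filter.atTop (nhds 1) := by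
  have hφ : Filter.Tendsto (fun u : ℝ => (1+(1-Δ)*u)^2 + 2*CC*u^2) (nhds 0) (nhds 1) := by
    have : Continuous (fun u : ℝ => (1+(1-Δ)*u)^2 + 2*CC*u^2) := by continuity
    have := this.tendsto 0
    simpa using this
  have hcomp := hφ.comp tendsto_inv_atTop_zero
  refine hcomp.congr' ?_
  filter_upwards [Filter.eventually_gt_atTop 0] with t ht
  have ht' : t ≠ 0 := ne_of_gt ht
  show (1+(1-Δ)*t⁻¹)^2 + 2*CC*(t⁻¹)^2 = ((t-Δ+1)^2 + 2*CC) / t^2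
  field_simp
  ring

lemma gauss_shift (Δ t : ℝ) :
    ((gaussianReal Δ 1) {x : ℝ | t ≤ x}).toReal = gTail (t - Δ) := by
  have hmap := gaussianReal_map_add_const (μ := 0) (v := 1) Δ
  rw [zero_add] at hmap
  have hset : {x : ℝ | t ≤ x} = Set.Ici t := rfl
  have hpre : (fun x : ℝ => x + Δ) ⁻¹' Set.Ici t = Set.Ici (t - Δ) := by
    ext x; simp [Set.mem_Ici, sub_le_iff_le_add]
  rw [gTail, hset, ← hmap,
    Measure.map_apply (measurable_add_const Δ) measurableSet_Ici, hpre]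
  rfl

/-- The log-exponent of the Neyman–Pearson classifier tends to 1: for the
Gaussian pair `N(Δ,1)` vs `N(0,1)`,
`log N(Δ,1)([t,∞)) / log N(0,1)([t,∞)) → 1` as `t → ∞`. -/
theorem np_log_exponent_tendsto_one (Δ : ℝ) (hΔ : 0 < Δ) :
    Filter.Tendsto
      (fun t : ℝ =>
        Real.log ((gaussianReal Δ 1) {x : ℝ | t ≤ x}).toReal /
          Real.log ((gaussianReal 0 1) {x : ℝ | t ≤ x}).toReal)
      Filter.atTop (nhds 1) := by
  have hrw : (fun t : ℝ =>
        Real.log ((gaussianReal Δ 1) {x : ℝ | t ≤ x}).toReal /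
          Real.log ((gaussianReal 0 1) {x : ℝ | t ≤ x}).toReal)
      = fun t : ℝ => Real.log (gTail (t - Δ)) / Real.log (gTail t) := by
    funext t
    rw [gauss_shift]
    rfl
  rw [hrw]
  refine tendsto_of_tendsto_of_tendsto_of_le_of_le' (tendsto_lo Δ) (tendsto_hi Δ) ?_ ?_
  · filter_upwards [Filter.eventually_ge_atTop (Δ + 1)] with t ht
    have ht1 : 1 ≤ t := by linarith
    have htΔ : 1 ≤ t - Δ := by linarith
    have hA1 : Real.log (gTail (t - Δ)) ≤ -(t-Δ)^2/2 := log_gTail_upper htΔ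
    have hA2 : -CC + (-((t-Δ)+1)^2/2) ≤ Real.log (gTail (t - Δ)) := log_gTail_lower (by linarith)
    have hB1 : Real.log (gTail t) ≤ -t^2/2 := log_gTail_upper ht1
    have hB2 : -CC + (-(t+1)^2/2) ≤ Real.log (gTail t) := log_gTail_lower (by linarith)
    have hBpos : 0 < -Real.log (gTail t) := by nlinarith
    have hA : (t-Δ)^2/2 ≤ -Real.log (gTail (t-Δ)) := by linarith
    have hB : -Real.log (gTail t) ≤ (t+1)^2/2 + CC := by linarith
    have hApos : (0:ℝ) ≤ -Real.log (gTail (t-Δ)) := by nlinarith [sq_nonneg (t-Δ)]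
    have key : ((t-Δ)^2/2) / ((t+1)^2/2 + CC)
        ≤ (-Real.log (gTail (t-Δ))) / (-Real.log (gTail t)) :=
      div_le_div₀ hApos hA hBpos hB
    have heq : (t-Δ)^2 / ((t+1)^2 + 2*CC) = ((t-Δ)^2/2) / ((t+1)^2/2 + CC) := by
      rw [div_eq_div_iff (by nlinarith [CC_pos, sq_nonneg (t+1)])
        (by nlinarith [CC_pos, sq_nonneg (t+1)])]
      ring
    have heq2 : Real.log (gTail (t - Δ)) / Real.log (gTail t)
        = (-Real.log (gTail (t-Δ))) / (-Real.log (gTail t)) := (neg_div_neg_eq _ _).symm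
    rw [heq, heq2]
    exact key
  · filter_upwards [Filter.eventually_ge_atTop (Δ + 1)] with t ht
    have ht1 : 1 ≤ t := by linarith
    have htΔ : 1 ≤ t - Δ := by linarith
    have hA2 : -CC + (-((t-Δ)+1)^2/2) ≤ Real.log (gTail (t - Δ)) := log_gTail_lower (by linarith)
    have hB1 : Real.log (gTail t) ≤ -t^2/2 := log_gTail_upper ht1
    have hBpos : 0 < -Real.log (gTail t) := by nlinarith
    have hA : -Real.log (gTail (t-Δ)) ≤ (t-Δ+1)^2/2 + CC := by linarith
    have hB : t^2/2 ≤ -Real.log (gTail t) := by linarith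
    have hdpos : (0:ℝ) < t^2/2 := by nlinarith
    have key : (-Real.log (gTail (t-Δ))) / (-Real.log (gTail t))
        ≤ ((t-Δ+1)^2/2 + CC) / (t^2/2) :=
      div_le_div₀ (by nlinarith [CC_pos, sq_nonneg (t-Δ+1)]) hA hdpos hB
    have heq : ((t-Δ+1)^2 + 2*CC) / t^2 = ((t-Δ+1)^2/2 + CC) / (t^2/2) := by
      rw [div_eq_div_iff (by nlinarith) (by nlinarith)]
      ring
    have heq2 : Real.log (gTail (t - Δ)) / Real.log (gTail t)
        = (-Real.log (gTail (t-Δ))) / (-Real.log (gTail t)) := (neg_div_neg_eq _ _).symm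
    rw [heq, heq2]
    exact key
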